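/- The uniformity of the ideal K_ω is at least 𝔭: every subset of (2^ω)^ω of cardinality less than the pseudo-intersection number 𝔭 can be covered by countably many graphs of partial Borel functions from (2^ω)^{ω∖{n}} to 2^ω. -/

import Mathlib

/-- The pseudo-intersection number `𝔭`: the least cardinality of a family of
subsets of `ℕ` with the strong finite intersection property but with no
infinite pseudo-intersection. -/
noncomputable def pNum : Cardinal :=
  sInf {κ | ∃ F : Set (Set ℕ), Cardinal.mk F = κ ∧
    (∀ S : Finset (Set ℕ), ↑S ⊆ F → Set.Infinite (⋂ s ∈ S, (s : Set ℕ))) ∧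
    ¬ ∃ P : Set ℕ, P.Infinite ∧ ∀ X ∈ F, (P \ X).Finite}

/-- `G` is the graph of a partial Borel function `(2^ω)^{ω∖{k}} → 2^ω` for some `k ∈ ω`. -/
def isBorelGraphW (G : Set (ℕ → ℕ → Bool)) : Prop :=
  ∃ k : ℕ, ∃ f : (ℕ → ℕ → Bool) → ℕ → Bool, ∃ D : Set (ℕ → ℕ → Bool),
    Measurable f ∧ MeasurableSet D ∧
    (∀ x y : ℕ → ℕ → Bool, (∀ j, j ≠ k → x j = y j) → f x = f y) ∧
    G = {x | x ∈ D ∧ x k = f x}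

/-- Membership in the σ-ideal `K_ω` σ-generated by such graphs. -/
def memKW (A : Set (ℕ → ℕ → Bool)) : Prop :=
  ∃ G : ℕ → Set (ℕ → ℕ → Bool), (∀ i, isBorelGraphW (G i)) ∧ A ⊆ ⋃ i, G i

namespace Stmt17Aux


open Set

abbrev XX := ℕ → ℕ → Bool

/-- Almost-equality of columns. -/
def R (x y : XX) : Prop := ({c : ℕ | x c ≠ y c}).Finite

lemma R_refl (x : XX) : R x x := by
  have : {c : ℕ | x c ≠ x c} = (∅ : Set ℕ) := by ext c; simp
  rw [R, this]; exact Set.finite_empty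

lemma R_symm {x y : XX} (h : R x y) : R y x := by
  have : {c : ℕ | y c ≠ x c} = {c : ℕ | x c ≠ y c} := by ext c; simp [ne_comm]
  rw [R, this]; exact h

lemma R_trans {x y z : XX} (h1 : R x y) (h2 : R y z) : R x z := by
  refine (h1.union h2).subset ?_
  intro c hc
  by_contra hc'
  simp only [Set.mem_union, Set.mem_setOf_eq] at hc'
  push_neg at hc'
  exact hc (hc'.1.trans hc'.2)

/-- The almost-equality class. -/
def cls (x : XX) : Set XX := {y | R x y}

lemma cls_eq {x y : XX} (h : R x y) : cls x = cls y := by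
  ext z
  constructor
  · intro hz; exact R_trans (R_symm h) hz
  · intro hz; exact R_trans h hz

open Classical in
/-- Selector. -/
noncomputable def base' (s : Set XX) : XX :=
  if h : s.Nonempty then h.some else fun _ _ => false

noncomputable def base (x : XX) : XX := base' (cls x)

lemma base_mem (x : XX) : base x ∈ cls x := by
  have h : (cls x).Nonempty := ⟨x, R_refl x⟩
  simp only [base, base', dif_pos h]
  exact h.some_mem

lemma R_base (x : XX) : R x (base x) := base_mem x

lemma base_eq_of_R {x y : XX} (h : R x y) : base x = base y := by
  unfold base
  rw [cls_eq h]

/-- Difference set from the base. -/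
def DD (x : XX) : Set ℕ := {c : ℕ | x c ≠ base x c}

lemma DD_finite (x : XX) : (DD x).Finite := R_base x

open Classical in
noncomputable def dfun (x : XX) : ℕ :=
  if h : (DD x).Nonempty then sSup (DD x) + 1 else 0

lemma key_inj (x y : XX) (hd : dfun x = dfun y)
    (hoff : ∀ j, j ≠ dfun x → x j = y j) : x = y := by
  classical
  have hR : R x y := by
    refine (Set.finite_singleton (dfun x)).subset ?_
    intro c hc
    simp only [Set.mem_setOf_eq] at hc
    simp only [Set.mem_singleton_iff]
    by_contra hne
    exact hc (hoff c hne)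
  have hb : base x = base y := base_eq_of_R hR
  by_cases hx : (DD x).Nonempty
  · have hdx : dfun x = sSup (DD x) + 1 := dif_pos hx
    by_cases hy : (DD y).Nonempty
    · have hdy : dfun y = sSup (DD y) + 1 := dif_pos hy
      have hxd : x (dfun x) = base x (dfun x) := by
        by_contra hne
        have hmem : dfun x ∈ DD x := hne
        have := le_csSup (DD_finite x).bddAbove hmem
        omega
      have hyd : y (dfun y) = base y (dfun y) := by
        by_contra hne
        have hmem : dfun y ∈ DD y := hne
        have := le_csSup (DD_finite y).bddAbove hmem
        omega
      funext c
      by_cases hc : c = dfun x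
      · subst hc
        calc x (dfun x) = base x (dfun x) := hxd
          _ = base y (dfun x) := by rw [hb]
          _ = base y (dfun y) := by rw [hd]
          _ = y (dfun y) := hyd.symm
          _ = y (dfun x) := by rw [hd]
      · exact hoff c hc
    · exfalso
      have hdy : dfun y = 0 := dif_neg hy
      omega
  · have hdx : dfun x = 0 := dif_neg hx
    have hxb : x = base x := by
      funext c
      by_contra hne
      exact hx ⟨c, hne⟩
    by_cases hy : (DD y).Nonempty
    · exfalso
      have hdy : dfun y = sSup (DD y) + 1 := dif_pos hy
      omega
    · have hyb : y = base y := by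
        funext c
        by_contra hne
        exact hy ⟨c, hne⟩
      rw [hxb, hb, ← hyb]



lemma exists_pseudo (F : Set (Set ℕ)) (hF : Cardinal.mk F < pNum)
    (hS : ∀ S : Finset (Set ℕ), ↑S ⊆ F → Set.Infinite (⋂ s ∈ S, (s : Set ℕ))) :
    ∃ P : Set ℕ, P.Infinite ∧ ∀ X ∈ F, (P \ X).Finite := by
  by_contra hno
  have hmem : Cardinal.mk ↥F ∈ {κ | ∃ F' : Set (Set ℕ), Cardinal.mk F' = κ ∧
      (∀ S : Finset (Set ℕ), ↑S ⊆ F' → Set.Infinite (⋂ s ∈ S, (s : Set ℕ))) ∧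
      ¬ ∃ P : Set ℕ, P.Infinite ∧ ∀ X ∈ F', (P \ X).Finite} := ⟨F, rfl, hS, hno⟩
  have : pNum ≤ Cardinal.mk ↥F := csInf_le' hmem
  exact absurd hF (not_lt.mpr this)

def Cyl (s : Finset ((ℕ × ℕ) × Bool)) : Set XX := {x | ∀ p ∈ s, x p.1.1 p.1.2 = p.2}

lemma measurable_coord (c m : ℕ) : Measurable fun x : XX => x c m :=
  (measurable_pi_apply m).comp (measurable_pi_apply c)

lemma Cyl_measurable (s : Finset ((ℕ × ℕ) × Bool)) : MeasurableSet (Cyl s) := by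
  have h : Cyl s = ⋂ p ∈ s, {x : XX | x p.1.1 p.1.2 = p.2} := by
    ext x; simp [Cyl]
  rw [h]
  refine Finset.measurableSet_biInter s (fun p _ => ?_)
  have : {x : XX | x p.1.1 p.1.2 = p.2} = (fun x : XX => x p.1.1 p.1.2) ⁻¹' {p.2} := by
    ext x; simp
  rw [this]
  exact (measurable_coord p.1.1 p.1.2) (measurableSet_singleton p.2)

def UU (w : Finset (Finset ((ℕ × ℕ) × Bool))) : Set XX := ⋃ s ∈ w, Cyl s

lemma UU_measurable (w : Finset (Finset ((ℕ × ℕ) × Bool))) : MeasurableSet (UU w) :=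
  Finset.measurableSet_biUnion w (fun s _ => Cyl_measurable s)

/-- Key lemma: every subset of a small set is relatively Borel. -/
lemma omega_lemma (Z Y : Set XX) (hYZ : Y ⊆ Z) (hc : Cardinal.mk Z < pNum) :
    ∃ B : Set XX, MeasurableSet B ∧ Z ∩ B = Y := by
  classical
  obtain ⟨e, he⟩ := exists_injective_nat (Finset (Finset ((ℕ × ℕ) × Bool)))
  set Good : XX → Finset (Finset ((ℕ × ℕ) × Bool)) → Prop :=
    fun z w => (z ∈ UU w ↔ z ∈ Y) with hGoodDef
  set Sc : XX → Set ℕ := fun z => e '' {w | Good z w} with hScDef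
  -- SFIP for the coded family
  have sfip : ∀ S : Finset (Set ℕ), ↑S ⊆ Sc '' Z →
      Set.Infinite (⋂ s ∈ S, (s : Set ℕ)) := by
    intro S hS
    have hch : ∀ s ∈ S, ∃ z, z ∈ Z ∧ Sc z = s := by
      intro s hs
      rcases hS hs with ⟨z, hz, hzz⟩
      exact ⟨z, hz, hzz⟩
    choose g hg1 hg2 using hch
    set L : Finset XX := S.attach.image (fun s => g s.1 s.2) with hLdef
    have hgL : ∀ s (hs : s ∈ S), g s hs ∈ L := by
      intro s hs
      simp only [hLdef, Finset.mem_image]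
      exact ⟨⟨s, hs⟩, Finset.mem_attach _ _, rfl⟩
    set LY : Finset XX := L.filter (fun z => z ∈ Y) with hLYdef
    set LN : Finset XX := L.filter (fun z => z ∉ Y) with hLNdef
    have hdiff : ∀ a ∈ LY, ∀ b ∈ LN, ∃ p : ℕ × ℕ, a p.1 p.2 ≠ b p.1 p.2 := by
      intro a ha b hb
      have haY : a ∈ Y := (Finset.mem_filter.mp ha).2
      have hbY : b ∉ Y := (Finset.mem_filter.mp hb).2
      have hab : a ≠ b := fun hh => hbY (hh ▸ haY)
      rcases Function.ne_iff.mp hab with ⟨c, hcab⟩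
      rcases Function.ne_iff.mp hcab with ⟨m, hm⟩
      exact ⟨(c, m), hm⟩
    choose dc hdc using hdiff
    set tau : ∀ a ∈ LY, Finset ((ℕ × ℕ) × Bool) := fun a ha =>
      LN.attach.image (fun b =>
        (dc a ha b.1 b.2, a (dc a ha b.1 b.2).1 (dc a ha b.1 b.2).2)) with htaudef
    set basew : Finset (Finset ((ℕ × ℕ) × Bool)) :=
      LY.attach.image (fun a => tau a.1 a.2) with hbwdef
    set pad : ℕ → Finset ((ℕ × ℕ) × Bool) :=
      fun N => {((N, 0), true), ((N, 0), false)} with hpaddef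
    set w : ℕ → Finset (Finset ((ℕ × ℕ) × Bool)) :=
      fun N => insert (pad N) basew with hwdef
    -- pad cylinders are empty
    have hpadempty : ∀ N, Cyl (pad N) = (∅ : Set XX) := by
      intro N
      ext x
      simp only [Cyl, Set.mem_setOf_eq, Set.mem_empty_iff_false, iff_false, not_forall]
      by_cases hx : x N 0 = true
      · refine ⟨((N, 0), false), ?_, ?_⟩
        · simp [hpaddef]
        · simp [hx]
      · refine ⟨((N, 0), true), ?_, ?_⟩
        · simp [hpaddef]
        · simpa using hx
    -- membership of a point of Y in its own cylinder
    have hselfmem : ∀ a (ha : a ∈ LY), a ∈ Cyl (tau a ha) := by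
      intro a ha
      intro p hp
      simp only [htaudef, Finset.mem_image] at hp
      rcases hp with ⟨b, _, rfl⟩
      rfl
    -- all points of L are Good for every w N
    have hGoodAll : ∀ z ∈ L, ∀ N, Good z (w N) := by
      intro z hzL N
      by_cases hzY : z ∈ Y
      · have hzLY : z ∈ LY := Finset.mem_filter.mpr ⟨hzL, hzY⟩
        refine iff_of_true ?_ hzY
        refine Set.mem_biUnion ?_ (hselfmem z hzLY)
        · simp only [hwdef]
          refine Finset.mem_insert_of_mem ?_
          simp only [hbwdef, Finset.mem_image]
          exact ⟨⟨z, hzLY⟩, Finset.mem_attach _ _, rfl⟩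
      · have hzLN : z ∈ LN := Finset.mem_filter.mpr ⟨hzL, hzY⟩
        refine iff_of_false ?_ hzY
        intro hzU
        rcases Set.mem_iUnion₂.mp hzU with ⟨s, hs, hzs⟩
        simp only [hwdef, Finset.mem_insert] at hs
        rcases hs with hs | hs
        · rw [hs, hpadempty N] at hzs
          exact hzs
        · simp only [hbwdef, Finset.mem_image] at hs
          rcases hs with ⟨a, _, rfl⟩
          have hp : (dc a.1 a.2 z hzLN,
              a.1 (dc a.1 a.2 z hzLN).1 (dc a.1 a.2 z hzLN).2) ∈ tau a.1 a.2 := by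
            simp only [htaudef, Finset.mem_image]
            exact ⟨⟨z, hzLN⟩, Finset.mem_attach _ _, rfl⟩
          have := hzs _ hp
          exact (hdc a.1 a.2 z hzLN) this.symm
    -- injectivity of N ↦ w N
    have hwinj : Function.Injective w := by
      intro N N' hNN'
      by_contra hne
      have hmem : pad N ∈ w N' := by
        rw [← hNN']
        simp [hwdef]
      simp only [hwdef, Finset.mem_insert] at hmem
      rcases hmem with hmem | hmem
      · have h1 : ((N, 0), true) ∈ pad N' := by
          rw [← hmem]; simp [hpaddef]
        simp only [hpaddef, Finset.mem_insert, Finset.mem_singleton, Prod.mk.injEq] at h1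
        rcases h1 with ⟨⟨h1, _⟩, _⟩ | ⟨_, h2⟩
        · exact hne h1
        · exact Bool.noConfusion h2
      · simp only [hbwdef, Finset.mem_image] at hmem
        rcases hmem with ⟨a, _, ha⟩
        have h1 : ((N, 0), true) ∈ tau a.1 a.2 := by rw [ha]; simp [hpaddef]
        have h2 : ((N, 0), false) ∈ tau a.1 a.2 := by rw [ha]; simp [hpaddef]
        simp only [htaudef, Finset.mem_image] at h1 h2
        rcases h1 with ⟨b1, _, hb1⟩
        rcases h2 with ⟨b2, _, hb2⟩
        have e1 : dc a.1 a.2 b1.1 b1.2 = (N, 0) := (Prod.mk.injEq _ _ _ _ ▸ hb1).1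
        have v1 : a.1 (dc a.1 a.2 b1.1 b1.2).1 (dc a.1 a.2 b1.1 b1.2).2 = true :=
          (Prod.mk.injEq _ _ _ _ ▸ hb1).2
        have e2 : dc a.1 a.2 b2.1 b2.2 = (N, 0) := (Prod.mk.injEq _ _ _ _ ▸ hb2).1
        have v2 : a.1 (dc a.1 a.2 b2.1 b2.2).1 (dc a.1 a.2 b2.1 b2.2).2 = false :=
          (Prod.mk.injEq _ _ _ _ ▸ hb2).2
        rw [e1] at v1
        rw [e2] at v2
        rw [v1] at v2
        exact Bool.noConfusion v2
    -- conclude SFIP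
    have hmemAll : ∀ N, e (w N) ∈ ⋂ s ∈ S, (s : Set ℕ) := by
      intro N
      rw [Set.mem_iInter₂]
      intro s hs
      rw [← hg2 s hs]
      exact ⟨w N, hGoodAll (g s hs) (hgL s hs) N, rfl⟩
    exact Set.infinite_of_injective_forall_mem (he.comp hwinj) hmemAll
  -- get pseudo-intersection
  have hcard : Cardinal.mk ↥(Sc '' Z) < pNum := lt_of_le_of_lt Cardinal.mk_image_le hc
  obtain ⟨P, hPinf, hPae⟩ := exists_pseudo (Sc '' Z) hcard sfip
  set V : ℕ → Set XX := fun n => ⋃ w' ∈ e ⁻¹' {n}, UU w' with hVdef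
  have hVmeas : ∀ n, MeasurableSet (V n) := fun n =>
    MeasurableSet.biUnion (Set.to_countable _) (fun w' _ => UU_measurable w')
  set B : Set XX := ⋃ n, ⋂ k ∈ {k : ℕ | k ∈ P ∧ n ≤ k}, V k with hBdef
  have hBmeas : MeasurableSet B :=
    MeasurableSet.iUnion (fun n =>
      MeasurableSet.biInter (Set.to_countable _) (fun k _ => hVmeas k))
  refine ⟨B, hBmeas, ?_⟩
  apply Set.Subset.antisymm
  · rintro z ⟨hzZ, hzB⟩
    by_contra hzY
    rcases Set.mem_iUnion.mp hzB with ⟨n, hn⟩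
    have hfin : (P \ Sc z).Finite := hPae (Sc z) ⟨z, hzZ, rfl⟩
    have hPn : (P ∩ {k : ℕ | n ≤ k}).Infinite := by
      intro hf
      have hsub : P ⊆ (P ∩ {k : ℕ | n ≤ k}) ∪ {k : ℕ | k < n} := by
        intro k hk
        by_cases hkn : n ≤ k
        · exact Or.inl ⟨hk, hkn⟩
        · exact Or.inr (show k < n by omega)
      exact hPinf ((hf.union (Set.finite_Iio n)).subset hsub)
    have hne : ((P ∩ {k : ℕ | n ≤ k}) \ (P \ Sc z)).Nonempty :=
      (hPn.diff hfin).nonempty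
    rcases hne with ⟨k, ⟨⟨hkP, hkn⟩, hknot⟩⟩
    have hkSc : k ∈ Sc z := by
      by_contra hks
      exact hknot ⟨hkP, hks⟩
    rcases hkSc with ⟨w', hGw', hew'⟩
    have hzV : z ∈ V k := by
      rw [Set.mem_iInter₂] at hn
      exact hn k ⟨hkP, hkn⟩
    rcases Set.mem_iUnion₂.mp hzV with ⟨w'', hw'', hzU⟩
    have hww : w'' = w' := he (by simp only [Set.mem_preimage, Set.mem_singleton_iff] at hw''; rw [hw'', hew'])
    rw [hww] at hzU
    exact hzY (hGw'.mp hzU)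
  · intro z hzY
    have hzZ := hYZ hzY
    refine ⟨hzZ, ?_⟩
    have hfin : (P \ Sc z).Finite := hPae (Sc z) ⟨z, hzZ, rfl⟩
    obtain ⟨n, hn⟩ := hfin.bddAbove
    refine Set.mem_iUnion.mpr ⟨n + 1, Set.mem_iInter₂.mpr ?_⟩
    rintro k ⟨hkP, hkn⟩
    have hkSc : k ∈ Sc z := by
      by_contra hks
      have := hn ⟨hkP, hks⟩
      omega
    rcases hkSc with ⟨w', hGw', hew'⟩
    refine Set.mem_biUnion ?_ (hGw'.mpr hzY)
    simpa [Set.mem_preimage] using hew'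


/-- Replace column `d` by the zero column. -/
def zeta (d : ℕ) (x : XX) : XX := Function.update x d (fun _ => false)

lemma zeta_measurable (d : ℕ) : Measurable (zeta d) := by
  refine measurable_pi_lambda _ (fun j => ?_)
  by_cases hj : j = d
  · subst hj
    have h : (fun x : XX => zeta j x j) = fun _ => (fun _ => false) := by
      funext x
      simp [zeta]
    rw [h]
    exact measurable_const
  · have h : (fun x : XX => zeta d x j) = fun x : XX => x j := by
      funext x
      simp [zeta, Function.update_of_ne hj]
    rw [h]
    exact measurable_pi_apply j

lemma zeta_eq_of_off (d : ℕ) (x y : XX) (hoff : ∀ j, j ≠ d → x j = y j) :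
    zeta d x = zeta d y := by
  funext j
  by_cases hj : j = d
  · subst hj; simp [zeta]
  · simp [zeta, Function.update_of_ne hj, hoff j hj]

lemma off_of_zeta_eq (d : ℕ) (x y : XX) (hz : zeta d x = zeta d y) :
    ∀ j, j ≠ d → x j = y j := by
  intro j hj
  have := congrFun hz j
  rwa [zeta, zeta, Function.update_of_ne hj, Function.update_of_ne hj] at this


end Stmt17Aux

/-- `𝔭 ≤ non(K_ω)`: every subset of `(2^ω)^ω` of size `< 𝔭` is covered by
countably many graphs of partial Borel functions, i.e. belongs to `K_ω`. -/
theorem stmt17 (A : Set (ℕ → ℕ → Bool)) (h : Cardinal.mk A < pNum) : memKW A := by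
  classical
  have hB : ∀ d m : ℕ, ∃ B : Set (ℕ → ℕ → Bool), MeasurableSet B ∧
      (Stmt17Aux.zeta d '' {x | x ∈ A ∧ Stmt17Aux.dfun x = d}) ∩ B
        = Stmt17Aux.zeta d '' {x | (x ∈ A ∧ Stmt17Aux.dfun x = d) ∧ x d m = true} := by
    intro d m
    refine Stmt17Aux.omega_lemma _ _ ?_ ?_
    · exact Set.image_mono (fun x hx => hx.1)
    · refine lt_of_le_of_lt ?_ h
      refine le_trans Cardinal.mk_image_le ?_
      exact Cardinal.mk_le_mk_of_subset (fun x hx => hx.1)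
  choose B hBmeas hBeq using hB
  set f : ℕ → (ℕ → ℕ → Bool) → ℕ → Bool :=
    fun d x m => if Stmt17Aux.zeta d x ∈ B d m then true else false with hfdef
  have hfmeas : ∀ d, Measurable (f d) := by
    intro d
    refine measurable_pi_lambda _ (fun m => ?_)
    have hp : MeasurableSet {x : ℕ → ℕ → Bool | Stmt17Aux.zeta d x ∈ B d m} :=
      (Stmt17Aux.zeta_measurable d) (hBmeas d m)
    exact Measurable.ite hp measurable_const measurable_const
  have hfign : ∀ d, ∀ x y : ℕ → ℕ → Bool, (∀ j, j ≠ d → x j = y j) → f d x = f d y := by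
    intro d x y hoff
    have hzz := Stmt17Aux.zeta_eq_of_off d x y hoff
    simp only [hfdef, hzz]
  refine ⟨fun d => {x | x ∈ (Set.univ : Set (ℕ → ℕ → Bool)) ∧ x d = f d x},
    fun d => ⟨d, f d, Set.univ, hfmeas d, MeasurableSet.univ, hfign d, rfl⟩, ?_⟩
  intro x hx
  refine Set.mem_iUnion.mpr ⟨Stmt17Aux.dfun x, Set.mem_univ x, ?_⟩
  set d := Stmt17Aux.dfun x with hddef
  funext m
  have hz : Stmt17Aux.zeta d x ∈
      Stmt17Aux.zeta d '' {x' | x' ∈ A ∧ Stmt17Aux.dfun x' = d} :=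
    ⟨x, ⟨hx, hddef.symm⟩, rfl⟩
  by_cases hbm : x d m = true
  · have hmem : Stmt17Aux.zeta d x ∈ B d m := by
      have hmem2 : Stmt17Aux.zeta d x ∈
          (Stmt17Aux.zeta d '' {x' | x' ∈ A ∧ Stmt17Aux.dfun x' = d}) ∩ B d m := by
        rw [hBeq d m]
        exact ⟨x, ⟨⟨hx, hddef.symm⟩, hbm⟩, rfl⟩
      exact hmem2.2
    simp [hfdef, hmem, hbm]
  · have hxf : x d m = false := by
      cases hxx : x d m
      · rfl
      · exact absurd hxx hbm
    have hnot : Stmt17Aux.zeta d x ∉ B d m := by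
      intro hmem
      have hmem2 : Stmt17Aux.zeta d x ∈ Stmt17Aux.zeta d ''
          {x' | (x' ∈ A ∧ Stmt17Aux.dfun x' = d) ∧ x' d m = true} := by
        rw [← hBeq d m]
        exact ⟨hz, hmem⟩
      rcases hmem2 with ⟨x', hx', hzz⟩
      have hoff : ∀ j, j ≠ d → x' j = x j := Stmt17Aux.off_of_zeta_eq d x' x hzz
      have hdd : Stmt17Aux.dfun x' = Stmt17Aux.dfun x := by rw [hx'.1.2, hddef]
      have hxeq : x' = x := Stmt17Aux.key_inj x' x hdd (by rw [hx'.1.2]; exact hoff)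
      rw [hxeq] at hx'
      exact hbm hx'.2
    simp [hfdef, hnot, hxf]
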